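/- Under the Myerson reverse auction with regular, strictly increasing virtual valuations c_i, if a candidate ρ ≠ 0 wins (i.e., c_ρ(v_ρ) < min over others including c₀(v₀) = v₀), then the payment ω = sup{s : c_ρ(s) < min_{i≠ρ} c_i(v_i)} satisfies v_ρ ≤ ω and c_ρ(ω) ≤ v₀; in particular if v₀ ≤ P_max then ω ≤ P_max (since c_ρ(ω) ≥ ω), so a winning candidate is always paid a feasible amount. -/
import Mathlib

open Set

/-- Regular reverse Myerson auction with participants `0, 1, …, n`,
valuations `v i ≥ 0`, and virtual valuations `c i` that are continuous, strictly
increasing, and satisfy `c i w ≥ w` for `w ≥ 0`, with `c 0 = id` (so `c 0 (v 0) = v 0`).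
If a candidate `ρ ≠ 0` wins, i.e. `c ρ (v ρ) < c i (v i)` for all `i ≠ ρ`, then the
Myerson payment `ω = sup{s : c ρ s < min_{i ≠ ρ} c i (v i)}` satisfies `v ρ ≤ ω` and
`c ρ ω ≤ v 0`; in particular, if `v 0 ≤ P_max` then `ω ≤ P_max`, so a winning candidate
is always paid a feasible amount. -/
theorem stmt_11 (n : ℕ) (c : Fin (n + 1) → ℝ → ℝ) (v : Fin (n + 1) → ℝ)
    (hvnonneg : ∀ i, 0 ≤ v i)
    (hcont : ∀ i, Continuous (c i)) (hmono : ∀ i, StrictMono (c i))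
    (hge : ∀ i, ∀ w : ℝ, 0 ≤ w → w ≤ c i w)
    (hc0 : ∀ w : ℝ, c 0 w = w)
    (ρ : Fin (n + 1)) (hρ : ρ ≠ 0)
    (hwin : ∀ i, i ≠ ρ → c ρ (v ρ) < c i (v i))
    (Pmax : ℝ) :
    v ρ ≤ sSup {s : ℝ | ∀ i, i ≠ ρ → c ρ s < c i (v i)} ∧
    c ρ (sSup {s : ℝ | ∀ i, i ≠ ρ → c ρ s < c i (v i)}) ≤ v 0 ∧
    (v 0 ≤ Pmax → sSup {s : ℝ | ∀ i, i ≠ ρ → c ρ s < c i (v i)} ≤ Pmax) := by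
  set S : Set ℝ := {s : ℝ | ∀ i, i ≠ ρ → c ρ s < c i (v i)} with hS
  have hmem : v ρ ∈ S := fun i hi => hwin i hi
  have h0ne : (0 : Fin (n + 1)) ≠ ρ := fun h => hρ h.symm
  have hlt : ∀ s ∈ S, c ρ s < v 0 := by
    intro s hs
    have := hs 0 h0ne
    rwa [hc0] at this
  have hbdd : BddAbove S := by
    refine ⟨v 0, fun s hs => ?_⟩
    rcases le_or_gt 0 s with h | h
    · exact le_of_lt (lt_of_le_of_lt (hge ρ s h) (hlt s hs))
    · exact h.le.trans (hvnonneg 0)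
  have hne : S.Nonempty := ⟨v ρ, hmem⟩
  have h1 : v ρ ≤ sSup S := le_csSup hbdd hmem
  have h2 : c ρ (sSup S) ≤ v 0 := by
    have hmap : c ρ (sSup S) = sSup (c ρ '' S) :=
      (hmono ρ).monotone.map_csSup_of_continuousAt ((hcont ρ).continuousAt) hne hbdd
    rw [hmap]
    exact csSup_le (hne.image _) (by rintro y ⟨s, hs, rfl⟩; exact (hlt s hs).le)
  refine ⟨h1, h2, fun hP => ?_⟩
  have h0 : 0 ≤ sSup S := (hvnonneg ρ).trans h1
  exact (hge ρ _ h0).trans (h2.trans hP)
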